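/- Let H be a commutative bialgebra over a commutative ring k, with coproduct Δ, counit ε and unit u. For k-linear maps f, g : H → H let f ⋆ g := m ∘ (f ⊗ g) ∘ Δ denote convolution, and let id^{⋆n} denote the n-th convolution power of the identity map (with id^{⋆0} = u ∘ ε). Then for all natural numbers n and k, the composite of id^{⋆n} with id^{⋆k} equals id^{⋆(nk)}: id^{⋆n} ∘ id^{⋆k} = id^{⋆(nk)} (the Adams operations are multiplicative under composition). -/

import Mathlib

open TensorProduct
variable {k H : Type*} [CommSemiring k] [CommSemiring H] [Bialgebra k H]

/-- Convolution product of linear endomorphisms of a bialgebra: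
`f ⋆ g := m ∘ (f ⊗ g) ∘ Δ`. -/
noncomputable def conv (f g : H →ₗ[k] H) : H →ₗ[k] H :=
  LinearMap.mul' k H ∘ₗ TensorProduct.map f g ∘ₗ Coalgebra.comul

lemma conv_repr (f g : H →ₗ[k] H) {x : H} {ι : Type*} (r : Coalgebra.Repr k x ι) :
    conv f g x = ∑ i ∈ r.index, f (r.left i) * g (r.right i) := by
  simp [conv, ← r.eq, map_sum]

lemma conv_assoc (f g h : H →ₗ[k] H) : conv (conv f g) h = conv f (conv g h) := by
  ext x
  set r := Coalgebra.Repr.arbitrary k x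
  set a₁ : (i : r.ι) → Coalgebra.Repr k (r.left i) (H × H) := fun i => Coalgebra.Repr.arbitrary k _
  set a₂ : (i : r.ι) → Coalgebra.Repr k (r.right i) (H × H) := fun i => Coalgebra.Repr.arbitrary k _
  have key := Coalgebra.sum_map_tmul_tmul_eq (R := k) f g h x (repr := r) (a₁ := a₁) (a₂ := a₂)
  have key2 := congrArg (LinearMap.mul' k H ∘ₗ LinearMap.lTensor H (LinearMap.mul' k H)) key
  simp only [map_sum, LinearMap.coe_comp, Function.comp_apply, LinearMap.lTensor_tmul,
    LinearMap.mul'_apply] at key2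
  calc conv (conv f g) h x
      = ∑ i ∈ r.index, ∑ j ∈ (a₁ i).index,
          f ((a₁ i).left j) * (g ((a₁ i).right j) * h (r.right i)) := by
        rw [conv_repr _ _ r]
        refine Finset.sum_congr rfl fun i _ => ?_
        rw [conv_repr _ _ (a₁ i), Finset.sum_mul]
        simp [mul_assoc]
    _ = ∑ i ∈ r.index, ∑ j ∈ (a₂ i).index,
          f (r.left i) * (g ((a₂ i).left j) * h ((a₂ i).right j)) := key2.symm
    _ = conv f (conv g h) x := by
        rw [conv_repr _ _ r]
        refine Finset.sum_congr rfl fun i _ => ?_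
        rw [conv_repr _ _ (a₂ i), Finset.mul_sum]

/-- Convolution powers of the identity map: `id^{⋆0} = u ∘ ε`,
`id^{⋆(n+1)} = id^{⋆n} ⋆ id`. -/
noncomputable def convPow : ℕ → (H →ₗ[k] H)
  | 0 => Algebra.linearMap k H ∘ₗ Coalgebra.counit
  | n + 1 => conv (convPow n) LinearMap.id

lemma conv_counit_right (f : H →ₗ[k] H) :
    conv f (Algebra.linearMap k H ∘ₗ Coalgebra.counit) = f := by
  ext x
  set r := Coalgebra.Repr.arbitrary k x
  have key := congrArg (TensorProduct.rid k H) (Coalgebra.sum_tmul_counit_eq r)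
  simp only [map_sum, TensorProduct.rid_tmul, one_smul] at key
  rw [conv_repr _ _ r]
  calc ∑ i ∈ r.index, f (r.left i) * (Algebra.linearMap k H ∘ₗ Coalgebra.counit) (r.right i)
      = f (∑ i ∈ r.index, Coalgebra.counit (R := k) (r.right i) • r.left i) := by
        rw [map_sum]
        refine Finset.sum_congr rfl fun i _ => ?_
        simp only [LinearMap.comp_apply, Algebra.linearMap_apply, map_smul]
        rw [Algebra.smul_def]
        exact mul_comm _ _
    _ = f x := by rw [key]

/-- Convolution of multiplicative maps is multiplicative (needs `H` commutative). -/
lemma conv_mul (f g : H →ₗ[k] H) (hf : ∀ a b, f (a * b) = f a * f b)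
    (hg : ∀ a b, g (a * b) = g a * g b) (x y : H) :
    conv f g (x * y) = conv f g x * conv f g y := by
  set rx := Coalgebra.Repr.arbitrary k x
  set ry := Coalgebra.Repr.arbitrary k y
  have hcom : CoalgebraStruct.comul (R := k) (x * y) =
      ∑ i ∈ rx.index, ∑ j ∈ ry.index,
        (rx.left i * ry.left j) ⊗ₜ[k] (rx.right i * ry.right j) := by
    rw [Bialgebra.comul_mul, ← rx.eq, ← ry.eq, Finset.sum_mul_sum]
    simp [Algebra.TensorProduct.tmul_mul_tmul]
  have : conv f g (x * y) = ∑ i ∈ rx.index, ∑ j ∈ ry.index,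
      f (rx.left i * ry.left j) * g (rx.right i * ry.right j) := by
    simp [conv, hcom, map_sum]
  rw [this, conv_repr _ _ rx, conv_repr _ _ ry, Finset.sum_mul_sum]
  refine Finset.sum_congr rfl fun i _ => Finset.sum_congr rfl fun j _ => ?_
  rw [hf, hg]; ring

lemma conv_one (f g : H →ₗ[k] H) (hf : f 1 = 1) (hg : g 1 = 1) : conv f g 1 = 1 := by
  have : CoalgebraStruct.comul (R := k) (1 : H) = 1 ⊗ₜ[k] 1 := by
    simpa using Bialgebra.comul_algebraMap (R := k) (A := H) 1
  simp [conv, this, hf, hg]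

lemma convPow_mul' (n : ℕ) : ∀ a b : H, convPow (k := k) n (a * b) =
    convPow (k := k) n a * convPow (k := k) n b := by
  induction n with
  | zero => intro a b; simp [convPow, Bialgebra.counit_mul, map_mul]
  | succ n ih => exact conv_mul _ _ ih (by simp)

lemma convPow_one' (n : ℕ) : convPow (k := k) (H := H) n 1 = 1 := by
  induction n with
  | zero => simp [convPow, Bialgebra.counit_one]
  | succ n ih => exact conv_one _ _ ih rfl

lemma comp_conv (h f g : H →ₗ[k] H) (hh : ∀ a b, h (a * b) = h a * h b) :
    h ∘ₗ conv f g = conv (h ∘ₗ f) (h ∘ₗ g) := by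
  ext x
  set r := Coalgebra.Repr.arbitrary k x
  rw [LinearMap.comp_apply, conv_repr _ _ r, conv_repr _ _ r, map_sum]
  exact Finset.sum_congr rfl fun i _ => hh _ _

lemma convPow_add (a b : ℕ) :
    convPow (k := k) (H := H) (a + b) = conv (convPow a) (convPow b) := by
  induction b with
  | zero => rw [Nat.add_zero]; exact (conv_counit_right _).symm
  | succ b ih => rw [← Nat.add_assoc]; show conv (convPow (a+b)) _ = _
                 rw [ih, conv_assoc]; rfl

/-- For a commutative bialgebra `H`, the Adams operations `id^{⋆n}` are multiplicative
under composition: `id^{⋆n} ∘ id^{⋆k} = id^{⋆(nk)}`. -/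
theorem convPow_comp_convPow (n m : ℕ) :
    (convPow (k := k) (H := H) n) ∘ₗ (convPow (k := k) (H := H) m) =
      convPow (k := k) (H := H) (n * m) := by
  induction m with
  | zero =>
    ext x
    simp only [Nat.mul_zero, LinearMap.comp_apply]
    show convPow n ((Algebra.linearMap k H ∘ₗ Coalgebra.counit) x) =
      (Algebra.linearMap k H ∘ₗ Coalgebra.counit) x
    simp only [LinearMap.comp_apply, Algebra.linearMap_apply, Algebra.algebraMap_eq_smul_one,
      map_smul, convPow_one']
  | succ m ih =>
    show convPow n ∘ₗ conv (convPow m) LinearMap.id = _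
    rw [comp_conv _ _ _ (convPow_mul' n), ih, LinearMap.comp_id,
      ← convPow_add, Nat.mul_succ]
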